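/- In the simplex setting, for all integers n with 4 ≤ n ≤ m, Σ_{σ∈A_m} σ(Op_n) = 2 · (n choose 2) · ((n−2) choose 2) · (m−4)! · Op_m in ℝ[G]. -/

import Mathlib

noncomputable section
open scoped Classical

/-- The Laplacian `Δ = |S|·1 - Σ_{s ∈ S} s` in the real group algebra `ℝ[G]`. -/
def lap {G : Type*} [Group G] (S : Finset G) : MonoidAlgebra ℝ G :=
  (S.card : MonoidAlgebra ℝ G) - ∑ s ∈ S, MonoidAlgebra.of ℝ G s

/-- The star involution on `ℝ[G]` induced by `g ↦ g⁻¹`. -/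
def starG {G : Type*} [Group G] (x : MonoidAlgebra ℝ G) : MonoidAlgebra ℝ G :=
  MonoidAlgebra.mapDomain (fun g => g⁻¹) x

/-- `g` lies in the ball of radius `R` about the identity in the word metric
induced by the (symmetric) set `S`. -/
def inBall {G : Type*} [Group G] (S : Set G) (R : ℕ) (g : G) : Prop :=
  ∃ l : List G, (∀ x ∈ l, x ∈ S) ∧ l.length ≤ R ∧ l.prod = g

/-- `x ∈ Σ²_R ℝ[G]`: `x` is a finite sum of hermitian squares `ξ_i* ξ_i` with each
`ξ_i` supported in the ball of radius `R` about the identity. -/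
def SOS {G : Type*} [Group G] (S : Set G) (R : ℕ) (x : MonoidAlgebra ℝ G) : Prop :=
  ∃ (N : ℕ) (ξ : Fin N → MonoidAlgebra ℝ G),
    (∀ i, ∀ g ∈ (ξ i).coeff.support, inBall S R g) ∧
    x = ∑ i, starG (ξ i) * ξ i

/-- The simplex setting: a group `G` with a finite symmetric generating set `S`
(with `1 ∉ S`), an action of the alternating group `A_m` on `G` by automorphisms
preserving `S`, and an `A_m`-equivariant labelling of `S` by edges (2-element
subsets) of `{1,…,m}` such that generators with disjoint labels commute. -/
structure SimplexSetting (m : ℕ) (G : Type*) [Group G] where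
  S : Finset G
  one_not_mem : (1 : G) ∉ S
  symm : ∀ s ∈ S, s⁻¹ ∈ S
  generates : Subgroup.closure (S : Set G) = ⊤
  act : alternatingGroup (Fin m) →* MulAut G
  act_mem : ∀ (σ : alternatingGroup (Fin m)), ∀ s ∈ S, act σ s ∈ S
  lbl : G → Finset (Fin m)
  lbl_card : ∀ s ∈ S, (lbl s).card = 2
  lbl_equivariant : ∀ (σ : alternatingGroup (Fin m)), ∀ s ∈ S,
    lbl (act σ s) = (lbl s).image (σ : Equiv.Perm (Fin m))
  comm : ∀ s ∈ S, ∀ t ∈ S, Disjoint (lbl s) (lbl t) → Commute s t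

namespace SimplexSetting

variable {m : ℕ} {G : Type*} [Group G] (P : SimplexSetting m G)

/-- The set `E_n` of edges of the simplex spanned by the first `n` vertices. -/
def edges (m n : ℕ) : Finset (Finset (Fin m)) :=
  Finset.univ.filter (fun e => e.card = 2 ∧ ∀ i ∈ e, (i : ℕ) < n)

/-- `S_e`: the generators labelled by the edge `e`. -/
def Se (e : Finset (Fin m)) : Finset G := P.S.filter (fun s => P.lbl s = e)

/-- The edge Laplacian `Δ_e = |S_e|·1 - Σ_{t ∈ S_e} t`. -/
def De (e : Finset (Fin m)) : MonoidAlgebra ℝ G :=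
  ((P.Se e).card : MonoidAlgebra ℝ G) - ∑ t ∈ P.Se e, MonoidAlgebra.of ℝ G t

/-- `Δ_n = Σ_{e ∈ E_n} Δ_e`. -/
def Dn (n : ℕ) : MonoidAlgebra ℝ G := ∑ e ∈ edges m n, P.De e

/-- `Sq_n = Σ_{e ∈ E_n} Δ_e²`. -/
def Sq (n : ℕ) : MonoidAlgebra ℝ G := ∑ e ∈ edges m n, (P.De e) ^ 2

/-- `Adj_n`: the sum of `Δ_e Δ_f` over ordered pairs of edges of `E_n` sharing
exactly one vertex. -/
def Adj (n : ℕ) : MonoidAlgebra ℝ G :=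
  ∑ e ∈ edges m n, ∑ f ∈ (edges m n).filter (fun f => (e ∩ f).card = 1), P.De e * P.De f

/-- `Op_n`: the sum of `Δ_e Δ_f` over ordered pairs of disjoint edges of `E_n`. -/
def Op (n : ℕ) : MonoidAlgebra ℝ G :=
  ∑ e ∈ edges m n, ∑ f ∈ (edges m n).filter (fun f => e ∩ f = ∅), P.De e * P.De f

/-- The induced action of `A_m` on the group algebra `ℝ[G]`. -/
def algAct (σ : alternatingGroup (Fin m)) (x : MonoidAlgebra ℝ G) : MonoidAlgebra ℝ G :=
  MonoidAlgebra.mapDomain (P.act σ) x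

/-- `h_n = (n-2)·(n-1)!/2`, as a real number. -/
def hr (n : ℕ) : ℝ := ((n : ℝ) - 2) * (Nat.factorial (n - 1)) / 2

end SimplexSetting

open SimplexSetting

section
open Finset
section AlgebraAux

variable {m : ℕ} {G : Type*} [Group G] (P : SimplexSetting m G)

lemma algAct_eq (σ : alternatingGroup (Fin m)) (x : MonoidAlgebra ℝ G) :
    P.algAct σ x = MonoidAlgebra.mapDomainRingHom ℝ (P.act σ).toMonoidHom x := rfl

lemma act_act_inv (σ : alternatingGroup (Fin m)) (g : G) :
    P.act σ (P.act σ⁻¹ g) = g := by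
  have h : P.act σ (P.act σ⁻¹ g) = (P.act σ * P.act σ⁻¹) g := rfl
  rw [h, ← map_mul, mul_inv_cancel, map_one]
  rfl

lemma coe_inv_perm (σ : alternatingGroup (Fin m)) :
    ((σ⁻¹ : alternatingGroup (Fin m)) : Equiv.Perm (Fin m)) = (σ : Equiv.Perm (Fin m))⁻¹ := rfl

lemma image_coe_inv_cancel {k : ℕ} (τ : Equiv.Perm (Fin k)) (s : Finset (Fin k)) :
    (s.image ⇑τ).image ⇑τ⁻¹ = s := by
  rw [Finset.image_image]
  refine (Finset.image_congr ?_).trans Finset.image_id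
  intro x _
  simp

lemma Se_image (σ : alternatingGroup (Fin m)) (e : Finset (Fin m)) :
    P.Se (e.image (σ : Equiv.Perm (Fin m))) = (P.Se e).image (P.act σ) := by
  ext g
  simp only [SimplexSetting.Se, Finset.mem_filter, Finset.mem_image]
  constructor
  · rintro ⟨hgS, hlbl⟩
    refine ⟨P.act σ⁻¹ g, ⟨?_, ?_⟩, act_act_inv P σ g⟩
    · exact P.act_mem σ⁻¹ g hgS
    · rw [P.lbl_equivariant σ⁻¹ g hgS, hlbl, coe_inv_perm, image_coe_inv_cancel]
  · rintro ⟨s, ⟨hsS, hlbl⟩, rfl⟩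
    refine ⟨P.act_mem σ s hsS, ?_⟩
    rw [P.lbl_equivariant σ s hsS, hlbl]

lemma algAct_De (σ : alternatingGroup (Fin m)) (e : Finset (Fin m)) :
    P.algAct σ (P.De e) = P.De (e.image (σ : Equiv.Perm (Fin m))) := by
  have hinj : Function.Injective (P.act σ) := (P.act σ).injective
  rw [algAct_eq, SimplexSetting.De, SimplexSetting.De, map_sub, map_natCast, map_sum,
    Se_image, Finset.card_image_of_injective _ hinj,
    Finset.sum_image (fun a _ b _ h => hinj h)]
  congr 1
  refine Finset.sum_congr rfl fun t _ => ?_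
  simp only [MonoidAlgebra.of_apply, MonoidAlgebra.mapDomainRingHom_apply]
  exact MonoidAlgebra.mapDomain_single

end AlgebraAux

section PermAux

variable {α : Type*} [Fintype α] [DecidableEq α]

lemma aux_exists_perm_image (s t : Finset α) (h : s.card = t.card) :
    ∃ σ : Equiv.Perm α, s.image σ = t := by
  have hcard : Fintype.card {x // x ∈ s} = Fintype.card {x // x ∈ t} := by
    simpa [Fintype.card_coe] using h
  let e : {x // x ∈ s} ≃ {x // x ∈ t} := Fintype.equivOfCardEq hcard
  refine ⟨e.extendSubtype, ?_⟩
  apply Finset.eq_of_subset_of_card_le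
  · intro y hy
    obtain ⟨x, hx, rfl⟩ := Finset.mem_image.mp hy
    exact e.extendSubtype_mem x hx
  · rw [Finset.card_image_of_injective _ (Equiv.injective _), h]

lemma aux_exists_perm_image_fix (s t u : Finset α) (h : s.card = t.card)
    (hsu : Disjoint s u) (htu : Disjoint t u) :
    ∃ σ : Equiv.Perm α, s.image σ = t ∧ ∀ x ∈ u, σ x = x := by
  set p : α → Prop := fun x => x ∉ u with hp
  have hs' : (s.subtype p).card = s.card := by
    rw [Finset.card_subtype, Finset.filter_true_of_mem]
    intro x hx; exact Finset.disjoint_left.mp hsu hx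
  have ht' : (t.subtype p).card = t.card := by
    rw [Finset.card_subtype, Finset.filter_true_of_mem]
    intro x hx; exact Finset.disjoint_left.mp htu hx
  obtain ⟨π, hπ⟩ := aux_exists_perm_image (s.subtype p) (t.subtype p) (by rw [hs', ht', h])
  refine ⟨π.extendDomain (Equiv.refl (Subtype p)), ?_, ?_⟩
  · apply Finset.eq_of_subset_of_card_le
    · intro y hy
      obtain ⟨x, hx, rfl⟩ := Finset.mem_image.mp hy
      have hxp : p x := Finset.disjoint_left.mp hsu hx
      rw [Equiv.Perm.extendDomain_apply_subtype _ _ hxp]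
      have : (⟨x, hxp⟩ : Subtype p) ∈ s.subtype p := by simpa [Finset.mem_subtype] using hx
      have hmem : π ⟨x, hxp⟩ ∈ t.subtype p := by
        rw [← hπ]; exact Finset.mem_image_of_mem _ this
      simpa [Finset.mem_subtype] using hmem
    · rw [Finset.card_image_of_injective _ (Equiv.injective _), h]
  · intro x hx
    exact Equiv.Perm.extendDomain_apply_not_subtype _ _ (by simp [hp, hx])

lemma aux_image_swap_pair (a b : α) : ({a, b} : Finset α).image (Equiv.swap a b) = {a, b} := by
  ext x
  simp only [Finset.mem_image, Finset.mem_insert, Finset.mem_singleton]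
  constructor
  · rintro ⟨y, hy, rfl⟩
    rcases hy with rfl | rfl
    · simp [Equiv.swap_apply_left]
    · simp [Equiv.swap_apply_right]
  · rintro (rfl | rfl)
    · exact ⟨b, Or.inr rfl, Equiv.swap_apply_right _ _⟩
    · exact ⟨a, Or.inl rfl, Equiv.swap_apply_left _ _⟩

lemma aux_exists_even_perm {m : ℕ} (e1 e2 f1 f2 : Finset (Fin m))
    (he1 : e1.card = 2) (he2 : e2.card = 2) (hf1 : f1.card = 2) (hf2 : f2.card = 2)
    (he : e1 ∩ e2 = ∅) (hf : f1 ∩ f2 = ∅) :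
    ∃ σ : Equiv.Perm (Fin m), Equiv.Perm.sign σ = 1 ∧
      e1.image σ = f1 ∧ e2.image σ = f2 := by
  obtain ⟨σ1, hσ1⟩ := aux_exists_perm_image e1 f1 (he1.trans hf1.symm)
  have hr1 : (e2.image σ1).card = 2 := by
    rw [Finset.card_image_of_injective _ (Equiv.injective _), he2]
  have hrdisj : Disjoint (e2.image σ1) f1 := by
    rw [← hσ1, Finset.disjoint_iff_inter_eq_empty, Finset.inter_comm,
      ← Finset.image_inter _ _ (Equiv.injective _), he, Finset.image_empty]
  have hfdisj : Disjoint f2 f1 := by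
    rw [Finset.disjoint_iff_inter_eq_empty, Finset.inter_comm]; exact hf
  obtain ⟨σ2, hσ2, hσ2fix⟩ :=
    aux_exists_perm_image_fix (e2.image σ1) f2 f1 (hr1.trans hf2.symm) hrdisj hfdisj
  set σ0 : Equiv.Perm (Fin m) := σ2 * σ1 with hσ0
  have h1 : e1.image σ0 = f1 := by
    rw [hσ0, Equiv.Perm.coe_mul, ← Finset.image_image, hσ1]
    apply Finset.image_congr (by intro x hx; exact hσ2fix x hx) |>.trans (Finset.image_id)
  have h2 : e2.image σ0 = f2 := by
    rw [hσ0, Equiv.Perm.coe_mul, ← Finset.image_image, hσ2]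
  obtain ⟨a, b, hab, he1ab⟩ := Finset.card_eq_two.mp he1
  rcases Int.units_eq_one_or (Equiv.Perm.sign σ0) with hs | hs
  · exact ⟨σ0, hs, h1, h2⟩
  · refine ⟨σ0 * Equiv.swap a b, ?_, ?_, ?_⟩
    · rw [map_mul, hs, Equiv.Perm.sign_swap hab]; norm_num
    · rw [Equiv.Perm.coe_mul, ← Finset.image_image, he1ab, aux_image_swap_pair, ← he1ab, h1]
    · rw [Equiv.Perm.coe_mul, ← Finset.image_image, ← h2]
      congr 1
      apply Finset.image_congr ?_ |>.trans Finset.image_id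
      intro x hx
      have hxa : x ≠ a := by
        intro h; subst h
        have : x ∈ e1 ∩ e2 := Finset.mem_inter.mpr ⟨by simp [he1ab], hx⟩
        simp [he] at this
      have hxb : x ≠ b := by
        intro h; subst h
        have : x ∈ e1 ∩ e2 := Finset.mem_inter.mpr ⟨by simp [he1ab], hx⟩
        simp [he] at this
      exact Equiv.swap_apply_of_ne_of_ne hxa hxb

end PermAux

def DP (m n : ℕ) : Finset (Finset (Fin m) × Finset (Fin m)) :=
  ((edges m n) ×ˢ (edges m n)).filter (fun p => p.1 ∩ p.2 = ∅)

lemma mem_edges_iff {m n : ℕ} {e : Finset (Fin m)} :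
    e ∈ edges m n ↔ e.card = 2 ∧ ∀ i ∈ e, (i : ℕ) < n := by
  simp [edges]

def Vn (m n : ℕ) : Finset (Fin m) := Finset.univ.filter (fun i => (i : ℕ) < n)

lemma card_Vn {m n : ℕ} (h : n ≤ m) : (Vn m n).card = n := by
  have heq : Vn m n = (Finset.range n).attachFin
      (fun i hi => lt_of_lt_of_le (Finset.mem_range.mp hi) h) := by
    ext i
    simp [Vn, Finset.mem_attachFin]
  rw [heq, Finset.card_attachFin, Finset.card_range]

lemma edges_eq_powersetCard (m n : ℕ) : edges m n = Finset.powersetCard 2 (Vn m n) := by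
  ext e
  simp only [mem_edges_iff, Finset.mem_powersetCard, Vn, Finset.subset_iff,
    Finset.mem_filter, Finset.mem_univ, true_and]
  tauto

lemma card_edges {m n : ℕ} (h : n ≤ m) : (edges m n).card = n.choose 2 := by
  rw [edges_eq_powersetCard, Finset.card_powersetCard, card_Vn h]

lemma edges_subset {m n : ℕ} (h : n ≤ m) : edges m n ⊆ edges m m := by
  intro e he
  rw [mem_edges_iff] at he ⊢
  exact ⟨he.1, fun i hi => lt_of_lt_of_le (he.2 i hi) h⟩

lemma DP_subset {m n : ℕ} (h : n ≤ m) : DP m n ⊆ DP m m := by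
  intro p hp
  rw [DP, Finset.mem_filter, Finset.mem_product] at hp ⊢
  exact ⟨⟨edges_subset h hp.1.1, edges_subset h hp.1.2⟩, hp.2⟩

lemma fiber_eq_powersetCard {m n : ℕ} {e : Finset (Fin m)} (he : e ∈ edges m n) :
    (edges m n).filter (fun f => e ∩ f = ∅) = Finset.powersetCard 2 (Vn m n \ e) := by
  ext f
  rw [Finset.mem_filter, edges_eq_powersetCard, Finset.mem_powersetCard,
    Finset.mem_powersetCard, Finset.subset_sdiff]
  constructor
  · rintro ⟨⟨h1, h2⟩, h3⟩
    refine ⟨⟨h1, ?_⟩, h2⟩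
    rw [Finset.disjoint_iff_inter_eq_empty, Finset.inter_comm]
    exact h3
  · rintro ⟨⟨h1, h2⟩, h3⟩
    refine ⟨⟨h1, h3⟩, ?_⟩
    rw [Finset.inter_comm, ← Finset.disjoint_iff_inter_eq_empty]
    exact h2

lemma e_subset_Vn {m n : ℕ} {e : Finset (Fin m)} (he : e ∈ edges m n) : e ⊆ Vn m n := by
  rw [edges_eq_powersetCard, Finset.mem_powersetCard] at he
  exact he.1

lemma card_DP {m n : ℕ} (h : n ≤ m) :
    (DP m n).card = n.choose 2 * (n - 2).choose 2 := by
  rw [DP, Finset.card_filter, Finset.sum_product]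
  have hinner : ∀ e ∈ edges m n,
      (∑ f ∈ edges m n, if e ∩ f = ∅ then 1 else 0) = (n - 2).choose 2 := by
    intro e he
    rw [← Finset.card_filter, fiber_eq_powersetCard he, Finset.card_powersetCard,
      Finset.card_sdiff_of_subset (e_subset_Vn he), card_Vn h, (mem_edges_iff.mp he).1]
  rw [Finset.sum_congr rfl hinner, Finset.sum_const, card_edges h, smul_eq_mul]

lemma factorial_identity {m : ℕ} (h : 4 ≤ m) :
    4 * Nat.factorial (m - 4) * (m.choose 2 * (m - 2).choose 2) = Nat.factorial m := by
  have h1 : m.choose 2 * 2 * Nat.factorial (m - 2) = Nat.factorial m := by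
    have := Nat.choose_mul_factorial_mul_factorial (show 2 ≤ m by omega)
    simpa [Nat.factorial] using this
  have h2 : (m - 2).choose 2 * 2 * Nat.factorial (m - 4) = Nat.factorial (m - 2) := by
    have := Nat.choose_mul_factorial_mul_factorial (show 2 ≤ m - 2 by omega)
    rw [show m - 2 - 2 = m - 4 by omega] at this
    simpa [Nat.factorial] using this
  calc 4 * Nat.factorial (m - 4) * (m.choose 2 * (m - 2).choose 2)
      = m.choose 2 * 2 * ((m - 2).choose 2 * 2 * Nat.factorial (m - 4)) := by ring
    _ = m.choose 2 * 2 * Nat.factorial (m - 2) := by rw [h2]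
    _ = Nat.factorial m := h1

section FiberAux

variable {m : ℕ}

lemma image_mem_edges_top {n : ℕ} {e : Finset (Fin m)} (he : e ∈ edges m n)
    (τ : Equiv.Perm (Fin m)) : e.image ⇑τ ∈ edges m m := by
  rw [mem_edges_iff] at he ⊢
  exact ⟨by rw [Finset.card_image_of_injective _ τ.injective, he.1],
    fun i _ => i.isLt⟩

lemma pairMap_mem_DP {n : ℕ} {p : Finset (Fin m) × Finset (Fin m)} (hp : p ∈ DP m n)
    (τ : Equiv.Perm (Fin m)) :
    (p.1.image ⇑τ, p.2.image ⇑τ) ∈ DP m m := by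
  rw [DP, Finset.mem_filter, Finset.mem_product] at hp ⊢
  exact ⟨⟨image_mem_edges_top hp.1.1 τ, image_mem_edges_top hp.1.2 τ⟩,
    by rw [← Finset.image_inter _ _ τ.injective, hp.2, Finset.image_empty]⟩

lemma exists_alt_perm (p q : Finset (Fin m) × Finset (Fin m))
    (hp : p ∈ DP m m) (hq : q ∈ DP m m) :
    ∃ τ : alternatingGroup (Fin m),
      p.1.image (τ : Equiv.Perm (Fin m)) = q.1 ∧ p.2.image (τ : Equiv.Perm (Fin m)) = q.2 := by
  rw [DP, Finset.mem_filter, Finset.mem_product] at hp hq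
  obtain ⟨σ, hs, h1, h2⟩ := aux_exists_even_perm p.1 p.2 q.1 q.2
    (mem_edges_iff.mp hp.1.1).1 (mem_edges_iff.mp hp.1.2).1
    (mem_edges_iff.mp hq.1.1).1 (mem_edges_iff.mp hq.1.2).1 hp.2 hq.2
  exact ⟨⟨σ, Equiv.Perm.mem_alternatingGroup.mpr hs⟩, h1, h2⟩

lemma image_coe_mul (g h : alternatingGroup (Fin m)) (s : Finset (Fin m)) :
    s.image ((↑(g * h) : Equiv.Perm (Fin m))) =
      (s.image ((h : Equiv.Perm (Fin m)))).image ((g : Equiv.Perm (Fin m))) := by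
  rw [Finset.image_image]
  rfl

lemma fiber_card_eq (hm : 4 ≤ m) {p : Finset (Fin m) × Finset (Fin m)} (hp : p ∈ DP m m)
    {q : Finset (Fin m) × Finset (Fin m)} (hq : q ∈ DP m m) :
    (Finset.univ.filter (fun σ : alternatingGroup (Fin m) =>
        (p.1.image (σ : Equiv.Perm (Fin m)), p.2.image (σ : Equiv.Perm (Fin m))) = q)).card
      = 2 * Nat.factorial (m - 4) := by
  set F : Finset (Fin m) × Finset (Fin m) → ℕ := fun q' =>
    (Finset.univ.filter (fun σ : alternatingGroup (Fin m) =>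
        (p.1.image (σ : Equiv.Perm (Fin m)), p.2.image (σ : Equiv.Perm (Fin m))) = q')).card
    with hF
  have hconst : ∀ q' ∈ DP m m, F q' = F p := by
    intro q' hq'
    obtain ⟨τ, hτ1, hτ2⟩ := exists_alt_perm p q' hp hq'
    rw [hF]
    refine Finset.card_bij' (fun σ _ => τ⁻¹ * σ) (fun σ _ => τ * σ) ?_ ?_ ?_ ?_
    · intro σ hσ
      have hφ := (Finset.mem_filter.mp hσ).2
      have h1 : p.1.image (σ : Equiv.Perm (Fin m)) = q'.1 := congrArg Prod.fst hφ
      have h2 : p.2.image (σ : Equiv.Perm (Fin m)) = q'.2 := congrArg Prod.snd hφ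
      refine Finset.mem_filter.mpr ⟨Finset.mem_univ _, ?_⟩
      have e1 : p.1.image ((τ⁻¹ * σ : alternatingGroup (Fin m)) : Equiv.Perm (Fin m)) = p.1 := by
        rw [image_coe_mul, h1, ← hτ1, coe_inv_perm, image_coe_inv_cancel]
      have e2 : p.2.image ((τ⁻¹ * σ : alternatingGroup (Fin m)) : Equiv.Perm (Fin m)) = p.2 := by
        rw [image_coe_mul, h2, ← hτ2, coe_inv_perm, image_coe_inv_cancel]
      exact Prod.ext e1 e2
    · intro σ hσ
      have hφ := (Finset.mem_filter.mp hσ).2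
      have h1 : p.1.image (σ : Equiv.Perm (Fin m)) = p.1 := congrArg Prod.fst hφ
      have h2 : p.2.image (σ : Equiv.Perm (Fin m)) = p.2 := congrArg Prod.snd hφ
      refine Finset.mem_filter.mpr ⟨Finset.mem_univ _, ?_⟩
      have e1 : p.1.image ((τ * σ : alternatingGroup (Fin m)) : Equiv.Perm (Fin m)) = q'.1 := by
        rw [image_coe_mul, h1, hτ1]
      have e2 : p.2.image ((τ * σ : alternatingGroup (Fin m)) : Equiv.Perm (Fin m)) = q'.2 := by
        rw [image_coe_mul, h2, hτ2]
      exact Prod.ext e1 e2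
    · intro σ _
      group
    · intro σ _
      group
  have hmaps : ∀ σ : alternatingGroup (Fin m), σ ∈ Finset.univ →
      (p.1.image (σ : Equiv.Perm (Fin m)), p.2.image (σ : Equiv.Perm (Fin m))) ∈ DP m m :=
    fun σ _ => pairMap_mem_DP hp _
  have hsum := Finset.card_eq_sum_card_fiberwise hmaps
  rw [Finset.card_univ] at hsum
  have hsum2 : Fintype.card (alternatingGroup (Fin m)) = (DP m m).card * F p := by
    rw [hsum, Finset.sum_congr rfl hconst, Finset.sum_const, smul_eq_mul]
  have hA : 2 * Fintype.card (alternatingGroup (Fin m)) = Nat.factorial m := by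
    haveI : Nontrivial (Fin m) := Fin.nontrivial_iff_two_le.mpr (by omega)
    rw [two_mul_card_alternatingGroup, Fintype.card_perm, Fintype.card_fin]
  have hDP : (DP m m).card = m.choose 2 * (m - 2).choose 2 := card_DP le_rfl
  have hpos : 0 < (DP m m).card := by
    rw [hDP]
    exact Nat.mul_pos (Nat.choose_pos (by omega)) (Nat.choose_pos (by omega))
  have hkey : (DP m m).card * (2 * F p) = (DP m m).card * (2 * (2 * Nat.factorial (m - 4))) := by
    have h1 : (DP m m).card * (2 * F p) = 2 * ((DP m m).card * F p) := by ring
    have h2 : (DP m m).card * (2 * (2 * Nat.factorial (m - 4)))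
        = 4 * Nat.factorial (m - 4) * (m.choose 2 * (m - 2).choose 2) := by
      rw [hDP]; ring
    rw [h1, ← hsum2, hA, h2, factorial_identity hm]
  have h2Fp := Nat.eq_of_mul_eq_mul_left hpos hkey
  have hFp : F p = 2 * Nat.factorial (m - 4) := by omega
  show F q = 2 * Nat.factorial (m - 4)
  rw [hconst q hq, hFp]

end FiberAux

section MainAux

variable {m : ℕ} {G : Type*} [Group G] (P : SimplexSetting m G)

lemma Op_eq (n : ℕ) : P.Op n = ∑ p ∈ DP m n, P.De p.1 * P.De p.2 := by
  rw [DP, Finset.sum_filter, Finset.sum_product]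
  unfold SimplexSetting.Op
  exact Finset.sum_congr rfl fun e _ => Finset.sum_filter _ _

end MainAux


end

/-- `Σ_{σ ∈ A_m} σ(Op_n) = 2·(n choose 2)·((n-2) choose 2)·(m-4)!·Op_m` for `4 ≤ n ≤ m`. -/
theorem sum_algAct_Op {m : ℕ} {G : Type*} [Group G]
    (P : SimplexSetting m G) (hm : 3 ≤ m) :
    ∀ n : ℕ, 4 ≤ n → n ≤ m →
      ∑ σ : alternatingGroup (Fin m), P.algAct σ (P.Op n) =
        ((2 * n.choose 2 * (n - 2).choose 2 * Nat.factorial (m - 4) : ℕ) : ℝ) •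
          P.Op m := by
  intro n hn4 hnm
  have hm4 : 4 ≤ m := le_trans hn4 hnm
  calc ∑ σ : alternatingGroup (Fin m), P.algAct σ (P.Op n)
      = ∑ σ : alternatingGroup (Fin m), ∑ p ∈ DP m n,
          P.De (p.1.image (σ : Equiv.Perm (Fin m))) *
            P.De (p.2.image (σ : Equiv.Perm (Fin m))) := by
        refine Finset.sum_congr rfl fun σ _ => ?_
        rw [Op_eq, algAct_eq, map_sum]
        refine Finset.sum_congr rfl fun pp _ => ?_
        rw [map_mul, ← algAct_eq, ← algAct_eq, algAct_De, algAct_De]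
    _ = ∑ p ∈ DP m n, ∑ σ : alternatingGroup (Fin m),
          P.De (p.1.image (σ : Equiv.Perm (Fin m))) *
            P.De (p.2.image (σ : Equiv.Perm (Fin m))) := Finset.sum_comm
    _ = ∑ p ∈ DP m n,
          (2 * Nat.factorial (m - 4)) • (∑ q ∈ DP m m, P.De q.1 * P.De q.2) := by
        refine Finset.sum_congr rfl fun p hp => ?_
        rw [← Finset.sum_fiberwise_of_maps_to
          (g := fun σ : alternatingGroup (Fin m) =>
            (p.1.image (σ : Equiv.Perm (Fin m)), p.2.image (σ : Equiv.Perm (Fin m))))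
          (t := DP m m) (fun σ _ => pairMap_mem_DP hp _)
          (fun σ : alternatingGroup (Fin m) =>
            P.De (p.1.image (σ : Equiv.Perm (Fin m))) *
              P.De (p.2.image (σ : Equiv.Perm (Fin m)))), Finset.smul_sum]
        refine Finset.sum_congr rfl fun q hq => ?_
        have hterm : ∀ σ ∈ Finset.univ.filter (fun σ : alternatingGroup (Fin m) =>
            (p.1.image (σ : Equiv.Perm (Fin m)), p.2.image (σ : Equiv.Perm (Fin m))) = q),
            P.De (p.1.image (σ : Equiv.Perm (Fin m))) *
              P.De (p.2.image (σ : Equiv.Perm (Fin m))) = P.De q.1 * P.De q.2 := by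
          intro σ hσ
          have h := (Finset.mem_filter.mp hσ).2
          rw [show p.1.image (σ : Equiv.Perm (Fin m)) = q.1 from congrArg Prod.fst h,
            show p.2.image (σ : Equiv.Perm (Fin m)) = q.2 from congrArg Prod.snd h]
        rw [Finset.sum_congr rfl hterm, Finset.sum_const,
          fiber_card_eq hm4 (DP_subset hnm hp) hq]
    _ = ((DP m n).card * (2 * Nat.factorial (m - 4))) •
          (∑ q ∈ DP m m, P.De q.1 * P.De q.2) := by
        rw [Finset.sum_const, smul_smul]
    _ = ((2 * n.choose 2 * (n - 2).choose 2 * Nat.factorial (m - 4) : ℕ) : ℝ) • P.Op m := by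
        rw [Op_eq, Nat.cast_smul_eq_nsmul]
        congr 1
        rw [card_DP hnm]
        ring


end
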